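/- Let G be a group, K a field, A a K-vector space, and Σ ⊆ A^G a linear subshift. Then (Σ^⊥)^⊥ = Σ, where Σ^⊥ = {τ ∈ LCA(G,A) : Σ ⊆ ker τ} and Γ^⊥ = ⋂_{τ∈Γ} ker τ for Γ ⊆ LCA(G,A). -/

import Mathlib

def shiftSigma (G : Type*) [Group G] {A : Type*} (D : Set G) (P : Set (D → A)) :
    Set (G → A) :=
  {x | ∀ g : G, (fun d : D => x (g * (d : G))) ∈ P}

def prodiscreteTop (G A : Type*) : TopologicalSpace (G → A) :=
  @Pi.topologicalSpace G (fun _ => A) (fun _ => ⊥)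

def IsLinearSubshift (K : Type*) {G A : Type*} [Field K] [Group G] [AddCommGroup A]
    [Module K A] (S : Set (G → A)) : Prop :=
  (∃ M : Submodule K (G → A), (M : Set (G → A)) = S) ∧
    (∀ g : G, ∀ x ∈ S, (fun h => x (g⁻¹ * h)) ∈ S) ∧
    @IsClosed _ (prodiscreteTop G A) S

def IsSFT {G A : Type*} [Group G] (S : Set (G → A)) : Prop :=
  ∃ (D : Finset G) (P : Set (↥(D : Set G) → A)), S = shiftSigma G (D : Set G) P

def IsLCA (K : Type*) {G A : Type*} [Field K] [Group G] [AddCommGroup A] [Module K A]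
    (τ : (G → A) → (G → A)) : Prop :=
  IsLinearMap K τ ∧ ∃ (M : Finset G) (μ : (↥(M : Set G) → A) → A), IsLinearMap K μ ∧
    ∀ (x : G → A) (g : G), τ x g = μ (fun m : (M : Set G) => x (g * (m : G)))

theorem stmt9 {G K A : Type*} [Group G] [Field K] [AddCommGroup A] [Module K A]
    (S : Set (G → A)) (hlin : IsLinearSubshift K S) :
    {x : G → A | ∀ τ : (G → A) → (G → A),
      IsLCA K τ → (∀ y ∈ S, τ y = 0) → τ x = 0} = S := by
  obtain ⟨⟨Msub, hMsub⟩, hshift, hclosed⟩ := hlin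
  ext x
  simp only [Set.mem_setOf_eq]
  constructor
  · intro hx
    by_contra hxS
    by_cases hA : ∀ a : A, a = 0
    · exact hxS (by
        have hx0 : x = 0 := funext fun g => hA _
        rw [hx0, ← hMsub]; exact Msub.zero_mem)
    push_neg at hA
    obtain ⟨a, ha⟩ := hA
    letI : TopologicalSpace A := ⊥
    have hopen : IsOpen Sᶜ := hclosed.isOpen_compl
    rw [isOpen_pi_iff] at hopen
    obtain ⟨I, u, hu, hsub⟩ := hopen x hxS
    -- restriction map
    let r : (G → A) →ₗ[K] ((↥(I : Set G)) → A) :=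
      LinearMap.funLeft K A ((↑) : ↥(I : Set G) → G)
    let N := Msub.map r
    have hrx : r x ∉ N := by
      rintro ⟨y, hyM, hyx⟩
      have hyS : y ∈ S := hMsub ▸ hyM
      have hyI : y ∈ (I : Set G).pi u := by
        intro i hi
        have : r y ⟨i, hi⟩ = r x ⟨i, hi⟩ := by rw [hyx]
        simp only [r, LinearMap.funLeft_apply] at this
        rw [this]
        exact (hu i hi).2
      exact hsub hyI hyS
    have hqx : N.mkQ (r x) ≠ 0 := by
      simpa [Submodule.Quotient.mk_eq_zero] using hrx
    obtain ⟨ψ, hψ⟩ : ∃ ψ : Module.Dual K (((↥(I : Set G)) → A) ⧸ N),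
        ψ (N.mkQ (r x)) ≠ 0 := by
      by_contra hc
      push_neg at hc
      exact hqx ((Module.forall_dual_apply_eq_zero_iff K _).mp hc)
    let f : ((↥(I : Set G)) → A) →ₗ[K] K := ψ ∘ₗ N.mkQ
    let μ : ((↥(I : Set G)) → A) → A := fun v => f v • a
    let τ : (G → A) → (G → A) := fun y g => μ (fun i : ↥(I : Set G) => y (g * (i : G)))
    have hfS : ∀ y ∈ S, ∀ g : G, f (fun i : ↥(I : Set G) => y (g * (i : G))) = 0 := by
      intro y hy g
      have hy' : (fun h => y (g * h)) ∈ S := by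
        have := hshift g⁻¹ y hy
        simpa using this
      have hmem : (fun i : ↥(I : Set G) => y (g * (i : G))) ∈ N :=
        ⟨fun h => y (g * h), hMsub ▸ hy', rfl⟩
      simp only [f, LinearMap.comp_apply, Submodule.mkQ_apply]
      rw [(Submodule.Quotient.mk_eq_zero N).mpr hmem, map_zero]
    have hLCA : IsLCA K τ := by
      refine ⟨⟨?_, ?_⟩, I, μ, ⟨?_, ?_⟩, fun y g => rfl⟩
      · intro y z
        funext g
        simp only [τ, μ]
        have : (fun i : ↥(I : Set G) => (y + z) (g * (i : G))) =
            (fun i : ↥(I : Set G) => y (g * (i : G))) +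
            (fun i : ↥(I : Set G) => z (g * (i : G))) := rfl
        rw [Pi.add_apply, this, map_add, add_smul]
      · intro c y
        funext g
        simp only [τ, μ]
        have : (fun i : ↥(I : Set G) => (c • y) (g * (i : G))) =
            c • (fun i : ↥(I : Set G) => y (g * (i : G))) := rfl
        rw [Pi.smul_apply, this, map_smul, smul_eq_mul, mul_smul]
      · intro v w; simp only [μ, map_add, add_smul]
      · intro c v; simp only [μ, map_smul, smul_eq_mul, mul_smul]
    have hvan : ∀ y ∈ S, τ y = 0 := by
      intro y hy
      funext g
      simp only [τ, μ, hfS y hy g, zero_smul, Pi.zero_apply]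
    have h0 := congrFun (hx τ hLCA hvan) 1
    simp only [τ, μ, Pi.zero_apply, one_mul] at h0
    rcases smul_eq_zero.mp h0 with h | h
    · exact hψ h
    · exact ha h
  · intro hxS τ _ hvan
    exact hvan x hxS
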